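/- Under the stated boundedness and strong Slater assumptions, the optimal-value function v is finite on the neighborhood N of p̂ and is Lipschitz continuous on some neighborhood of p̂; that is, there exist L ≥ 0 and δ > 0 such that |v(p) − v(q)| ≤ L·‖p − q‖ whenever ‖p − p̂‖ < δ and ‖q − p̂‖ < δ. -/

import Mathlib

open Matrix Set

private lemma mulVec_surj_of_rows_indep {nh nx : ℕ} (A : Matrix (Fin nh) (Fin nx) ℝ)
    (hA : LinearIndependent ℝ (fun j : Fin nh => A j)) :
    Function.Surjective A.mulVec := by
  have hinj : Function.Injective A.vecMul := Matrix.vecMul_injective_iff.mpr hA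
  have h1 : Function.Injective Aᵀ.mulVecLin := by
    have h2 : (Aᵀ.mulVecLin : (Fin nh → ℝ) → (Fin nx → ℝ)) = A.vecMul := by
      ext y j; simp [Matrix.mulVec_transpose]
    show Function.Injective ⇑Aᵀ.mulVecLin
    rw [h2]; exact hinj
  have hrank : Aᵀ.rank = nh := by
    rw [Matrix.rank, LinearMap.finrank_range_of_inj h1]; simp
  have hr : A.rank = nh := by rw [← Matrix.rank_transpose]; exact hrank
  have htop : LinearMap.range A.mulVecLin = ⊤ := by
    apply Submodule.eq_top_of_finrank_eq
    rw [← Matrix.rank] at *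
    simpa using hr
  intro y
  obtain ⟨x, hx⟩ := LinearMap.range_eq_top.mp htop y
  exact ⟨x, hx⟩

set_option maxHeartbeats 2000000 in
theorem optimal_value_function_lipschitz
    (nx np ng nh : ℕ) (hnx : 0 < nx) (hnp : 0 < np) (hng : 0 < ng) (hnh : 0 < nh)
    (g : Fin ng → (Fin nx → ℝ) → (Fin np → ℝ) → ℝ)
    (hg_smooth : ∀ k : Fin ng,
      ContDiff ℝ 1 (fun q : (Fin nx → ℝ) × (Fin np → ℝ) => g k q.1 q.2))
    (hg_convex : ∀ k : Fin ng,
      ConvexOn ℝ Set.univ (fun q : (Fin nx → ℝ) × (Fin np → ℝ) => g k q.1 q.2))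
    (A : Matrix (Fin nh) (Fin nx) ℝ) (C : Matrix (Fin nh) (Fin np) ℝ)
    (b : Fin nh → ℝ)
    (hA : LinearIndependent ℝ (fun j : Fin nh => A j))
    (Ω : (Fin np → ℝ) → Set (Fin nx → ℝ))
    (hΩ : ∀ p, Ω p =
      {ξ | A.mulVec ξ + C.mulVec p + b = 0 ∧ ∀ k : Fin ng, g k ξ p ≤ 0})
    (i : Fin nx)
    (v : (Fin np → ℝ) → ℝ)
    (hv : ∀ p, v p = sInf ((fun ξ => ξ i) '' Ω p))
    (phat : Fin np → ℝ)
    (hbdd : ∃ R : ℝ, 0 < R ∧ ∀ p : Fin np → ℝ, ∀ ξ ∈ Ω p, ‖ξ‖ ≤ R)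
    (N : Set (Fin np → ℝ)) (hNopen : IsOpen N) (hpN : phat ∈ N)
    (hslater : ∀ p ∈ N, ∃ ξ : Fin nx → ℝ,
      A.mulVec ξ + C.mulVec p + b = 0 ∧ ∀ k : Fin ng, g k ξ p < 0) :
    (∀ p ∈ N, (Ω p).Nonempty) ∧
      ∃ L : ℝ, 0 ≤ L ∧ ∃ δ : ℝ, 0 < δ ∧
        ∀ p q : Fin np → ℝ, ‖p - phat‖ < δ → ‖q - phat‖ < δ →
          |v p - v q| ≤ L * ‖p - q‖ := by
  obtain ⟨R, hR, hRb⟩ := hbdd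
  have hne : Nonempty (Fin ng) := ⟨⟨0, hng⟩⟩
  -- nonemptiness on N
  have hΩne : ∀ p ∈ N, (Ω p).Nonempty := by
    intro p hp
    obtain ⟨ξ, hξ1, hξ2⟩ := hslater p hp
    exact ⟨ξ, by rw [hΩ]; exact ⟨hξ1, fun k => (hξ2 k).le⟩⟩
  refine ⟨hΩne, ?_⟩
  -- Slater point at phat
  obtain ⟨ξh, hξh1, hξh2⟩ := hslater phat hpN
  -- margin ε
  obtain ⟨ε, hε, hε_le⟩ : ∃ ε : ℝ, 0 < ε ∧ ∀ k, g k ξh phat ≤ -ε := by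
    refine ⟨Finset.univ.inf' Finset.univ_nonempty (fun k => -(g k ξh phat)), ?_, ?_⟩
    · rw [Finset.lt_inf'_iff]
      intro k _
      simpa using hξh2 k
    · intro k
      have := Finset.inf'_le (fun k => -(g k ξh phat)) (Finset.mem_univ k)
      linarith [this]
  -- right inverse and the correction map T
  obtain ⟨T, hT⟩ : ∃ T : (Fin np → ℝ) →ₗ[ℝ] (Fin nx → ℝ),
      ∀ y, A.mulVec (T y) = C.mulVec y := by
    obtain ⟨B, hB⟩ := A.mulVecLin.exists_rightInverse_of_surjective
      (LinearMap.range_eq_top.mpr (by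
        have := mulVec_surj_of_rows_indep A hA
        intro y; obtain ⟨x, hx⟩ := this y; exact ⟨x, hx⟩))
    refine ⟨B ∘ₗ C.mulVecLin, fun y => ?_⟩
    have := congrArg (fun φ => φ (C.mulVecLin y)) hB
    simpa using this
  obtain ⟨c, hc0, hc⟩ : ∃ c : ℝ, 0 ≤ c ∧ ∀ y, ‖T y‖ ≤ c * ‖y‖ := by
    let Tc := LinearMap.toContinuousLinearMap T
    exact ⟨‖Tc‖, norm_nonneg _, fun y => Tc.le_opNorm y⟩
  -- shifted Slater points
  set s : (Fin np → ℝ) → (Fin nx → ℝ) := fun q => ξh + T (phat - q) with hs_def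
  have hs_eq : ∀ q, A.mulVec (s q) + C.mulVec q + b = 0 := by
    intro q
    have h1 : A.mulVec (s q) = A.mulVec ξh + C.mulVec phat - C.mulVec q := by
      show A.mulVec (ξh + T (phat - q)) = _
      rw [Matrix.mulVec_add, hT, Matrix.mulVec_sub]
      abel
    rw [h1, show A.mulVec ξh + C.mulVec phat - C.mulVec q + C.mulVec q + b
        = A.mulVec ξh + C.mulVec phat + b by abel, hξh1]
  have hgcont : ∀ k, Continuous (fun q : (Fin np → ℝ) => g k (s q) q) := by
    intro k
    have h1 : Continuous (fun q : (Fin np → ℝ) => ((s q, q) : (Fin nx → ℝ) × (Fin np → ℝ))) := by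
      apply Continuous.prodMk
      · exact continuous_const.add
          ((LinearMap.toContinuousLinearMap T).continuous.comp (continuous_const.sub continuous_id))
      · exact continuous_id
    exact ((hg_smooth k).continuous).comp h1
  obtain ⟨δ₁, hδ₁, hδ₁U⟩ : ∃ δ₁ : ℝ, 0 < δ₁ ∧
      ∀ q : Fin np → ℝ, ‖q - phat‖ < δ₁ → ∀ k, g k (s q) q < -(ε/2) := by
    set U : Set (Fin np → ℝ) := ⋂ k : Fin ng, {q | g k (s q) q < -(ε/2)} with hU_def
    have hUopen : IsOpen U := by
      apply isOpen_iInter_of_finite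
      intro k
      exact isOpen_lt (hgcont k) continuous_const
    have hpU : phat ∈ U := by
      refine mem_iInter.mpr fun k => ?_
      have hsp : s phat = ξh := by rw [hs_def]; simp
      show g k (s phat) phat < -(ε/2)
      rw [hsp]
      have := hε_le k
      linarith
    obtain ⟨δ₁, hδ₁, hδ₁U⟩ := Metric.isOpen_iff.mp hUopen phat hpU
    refine ⟨δ₁, hδ₁, fun q hq k => ?_⟩
    have : q ∈ U := hδ₁U (by rw [Metric.mem_ball, dist_eq_norm]; exact hq)
    exact mem_iInter.mp this k
  -- Lipschitz constants for the g k on a fixed compact convex box K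
  obtain ⟨M', hM'0, hM'⟩ : ∃ M' : ℝ, 0 ≤ M' ∧ ∀ k : Fin ng,
      ∀ x y : (Fin nx → ℝ) × (Fin np → ℝ),
        ‖x.1‖ ≤ R + c * 2 → ‖x.2 - phat‖ ≤ 1 → ‖y.1‖ ≤ R + c * 2 → ‖y.2 - phat‖ ≤ 1 →
        ‖g k y.1 y.2 - g k x.1 x.2‖ ≤ M' * ‖y - x‖ := by
    set K : Set ((Fin nx → ℝ) × (Fin np → ℝ)) :=
      (Metric.closedBall (0 : Fin nx → ℝ) (R + c * 2)) ×ˢ (Metric.closedBall phat 1) with hK_def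
    have hKcompact : IsCompact K := (isCompact_closedBall _ _).prod (isCompact_closedBall _ _)
    have hKconvex : Convex ℝ K := (convex_closedBall _ _).prod (convex_closedBall _ _)
    have hM : ∀ k : Fin ng, ∃ M : ℝ, 0 ≤ M ∧ ∀ x ∈ K, ∀ y ∈ K,
        ‖g k y.1 y.2 - g k x.1 x.2‖ ≤ M * ‖y - x‖ := by
      intro k
      have hf := hg_smooth k
      have hcont : ContinuousOn
          (fderiv ℝ (fun q : (Fin nx → ℝ) × (Fin np → ℝ) => g k q.1 q.2)) K :=
        (hf.continuous_fderiv one_ne_zero).continuousOn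
      obtain ⟨M0, hM0⟩ := hKcompact.exists_bound_of_continuousOn hcont
      refine ⟨max M0 0, le_max_right _ _, fun x hx y hy => ?_⟩
      exact hKconvex.norm_image_sub_le_of_norm_fderiv_le
        (fun z _ => (hf.differentiable one_ne_zero).differentiableAt)
        (fun z hz => (hM0 z hz).trans (le_max_left _ _)) hx hy
    choose Mf hMf0 hMf using hM
    refine ⟨Finset.univ.sup' Finset.univ_nonempty Mf,
      le_trans (hMf0 (Classical.arbitrary _)) (Finset.le_sup' _ (Finset.mem_univ _)),
      fun k x y hx1 hx2 hy1 hy2 => ?_⟩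
    have hxK : x ∈ K := by
      refine ⟨?_, ?_⟩
      · simpa [dist_zero_right] using hx1
      · simpa [Metric.mem_closedBall, dist_eq_norm] using hx2
    have hyK : y ∈ K := by
      refine ⟨?_, ?_⟩
      · simpa [dist_zero_right] using hy1
      · simpa [Metric.mem_closedBall, dist_eq_norm] using hy2
    calc ‖g k y.1 y.2 - g k x.1 x.2‖ ≤ Mf k * ‖y - x‖ := hMf k x hxK y hyK
      _ ≤ _ := mul_le_mul_of_nonneg_right
          (Finset.le_sup' _ (Finset.mem_univ k)) (norm_nonneg _)
  -- clear the concrete formula for s; keep its properties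
  clear_value s
  clear hs_def
  -- pick δ and L
  obtain ⟨δ, hδ0, hδa, hδb, hδc⟩ : ∃ δ : ℝ, 0 < δ ∧ δ ≤ δ₁ ∧ δ ≤ 1 ∧
      δ ≤ ε / (4 * ((c + 1) * M') + 1) := by
    refine ⟨min (min δ₁ 1) (ε / (4 * ((c + 1) * M') + 1)), ?_, ?_, ?_, min_le_right _ _⟩
    · apply lt_min (lt_min hδ₁ one_pos)
      have : 0 < 4 * ((c + 1) * M') + 1 := by nlinarith
      positivity
    · exact le_trans (min_le_left _ _) (min_le_left _ _)
    · exact le_trans (min_le_left _ _) (min_le_right _ _)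
  obtain ⟨L, hL0, hLval⟩ : ∃ L : ℝ, 0 ≤ L ∧
      L = c + (2 * ((c + 1) * M') / ε) * (2 * R + 2 * c) := by
    refine ⟨_, ?_, rfl⟩
    have h1 : 0 ≤ (2 * ((c + 1) * M') / ε) * (2 * R + 2 * c) := by positivity
    linarith
  refine ⟨L, hL0, δ, hδ0, ?_⟩
  have hsmem : ∀ q : Fin np → ℝ, ‖q - phat‖ < δ → s q ∈ Ω q := by
    intro q hq
    rw [hΩ]
    refine ⟨hs_eq q, fun k => ?_⟩
    have h2 := hδ₁U q (lt_of_lt_of_le hq hδa) k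
    linarith
  have hbddB : ∀ p : Fin np → ℝ, BddBelow ((fun ξ => ξ i) '' Ω p) := by
    intro p
    refine ⟨-R, fun a ha => ?_⟩
    obtain ⟨ξ, hξ, rfl⟩ := ha
    have h1 : |ξ i| ≤ ‖ξ‖ := by
      have := norm_le_pi_norm ξ i
      simpa using this
    have h2 := hRb p ξ hξ
    have h3 := abs_le.mp (h1.trans h2)
    linarith [h3.1]
  -- key one-sided estimate
  have key : ∀ p q : Fin np → ℝ, ‖p - phat‖ < δ → ‖q - phat‖ < δ →
      v q ≤ v p + L * ‖p - q‖ := by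
    intro p q hp hq
    have hΩpne : ((fun ξ => ξ i) '' Ω p).Nonempty := ⟨(s p) i, ⟨s p, hsmem p hp, rfl⟩⟩
    have hpq : ‖p - q‖ ≤ ‖p - phat‖ + ‖q - phat‖ := by
      calc ‖p - q‖ ≤ ‖p - phat‖ + ‖phat - q‖ := norm_sub_le_norm_sub_add_norm_sub p phat q
        _ = ‖p - phat‖ + ‖q - phat‖ := by rw [norm_sub_rev phat q]
    have hpq2 : ‖p - q‖ ≤ 2 := by linarith
    have main : ∀ ξ ∈ Ω p, v q ≤ ξ i + L * ‖p - q‖ := by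
      intro ξ hξ
      obtain ⟨hξeq, hξineq⟩ : A.mulVec ξ + C.mulVec p + b = 0 ∧ ∀ k, g k ξ p ≤ 0 := by
        rw [hΩ] at hξ; exact hξ
      have hξR : ‖ξ‖ ≤ R := hRb p ξ hξ
      have hsqR : ‖s q‖ ≤ R := hRb q _ (hsmem q hq)
      set η : Fin nx → ℝ := ξ + T (p - q) with hη_def
      have hηξ : η - ξ = T (p - q) := by rw [hη_def]; abel
      have hηb : ‖η‖ ≤ R + c * 2 := by
        have h1 : ‖η‖ ≤ ‖ξ‖ + ‖T (p - q)‖ := norm_add_le _ _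
        have h2 : ‖T (p - q)‖ ≤ c * ‖p - q‖ := hc _
        nlinarith [hc0]
      have hηeq : A.mulVec η + C.mulVec q + b = 0 := by
        have h1 : A.mulVec η = A.mulVec ξ + C.mulVec (p - q) := by
          rw [hη_def, Matrix.mulVec_add, hT]
        rw [h1, Matrix.mulVec_sub,
          show A.mulVec ξ + (C.mulVec p - C.mulVec q) + C.mulVec q + b
            = A.mulVec ξ + C.mulVec p + b by abel]
        exact hξeq
      clear_value η
      clear hη_def
      set t : ℝ := 2 * ((c + 1) * M') * ‖p - q‖ / ε with ht_def
      have ht0 : 0 ≤ t := by positivity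
      have htε : t * (ε / 2) = (c + 1) * M' * ‖p - q‖ := by
        rw [ht_def]; field_simp
      have ht1 : t ≤ 1 := by
        rw [ht_def, div_le_one hε]
        have h4 : (0:ℝ) < 4 * ((c + 1) * M') + 1 := by nlinarith
        rw [le_div_iff₀ h4] at hδc
        have hX0 : (0:ℝ) ≤ (c + 1) * M' := mul_nonneg (by linarith) hM'0
        have h5 : 2 * ((c + 1) * M') * ‖p - q‖ ≤ 2 * ((c + 1) * M') * (2 * δ) := by
          apply mul_le_mul_of_nonneg_left (by linarith) (by linarith)
        nlinarith
      clear_value t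
      clear ht_def
      set ζ : Fin nx → ℝ := (1 - t) • η + t • (s q) with hζ_def
      have hζeq : A.mulVec ζ + C.mulVec q + b = 0 := by
        have h1 : A.mulVec ζ = (1 - t) • A.mulVec η + t • A.mulVec (s q) := by
          rw [hζ_def, Matrix.mulVec_add, Matrix.mulVec_smul, Matrix.mulVec_smul]
        have h2 : A.mulVec η = -(C.mulVec q + b) := by linear_combination hηeq
        have h3 : A.mulVec (s q) = -(C.mulVec q + b) := by linear_combination hs_eq q
        rw [h1, h2, h3, ← add_smul, show (1 - t) + t = 1 by ring, one_smul]
        abel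
      have hgη : ∀ k, g k η q ≤ (c + 1) * M' * ‖p - q‖ := by
        intro k
        have h1 := hM' k (ξ, p) (η, q)
          (by nlinarith [hc0]) (by linarith) hηb (by linarith)
        have h2 : ‖((η, q) : (Fin nx → ℝ) × (Fin np → ℝ)) - (ξ, p)‖
            ≤ (c + 1) * ‖p - q‖ := by
          rw [Prod.norm_def]
          apply max_le
          · show ‖η - ξ‖ ≤ _
            rw [hηξ]
            calc ‖T (p - q)‖ ≤ c * ‖p - q‖ := hc _
              _ ≤ (c + 1) * ‖p - q‖ := by nlinarith [norm_nonneg (p - q)]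
          · show ‖q - p‖ ≤ _
            rw [norm_sub_rev]
            nlinarith [hc0, norm_nonneg (p - q)]
        have h3 : ‖g k η q - g k ξ p‖ ≤ M' * ((c + 1) * ‖p - q‖) := by
          refine le_trans h1 ?_
          exact mul_le_mul_of_nonneg_left h2 hM'0
        have h4 := (abs_le.mp h3).2
        have := hξineq k
        nlinarith
      have hgζ : ∀ k, g k ζ q ≤ 0 := by
        intro k
        have hcmb : ((ζ, q) : (Fin nx → ℝ) × (Fin np → ℝ))
            = (1 - t) • ((η, q) : (Fin nx → ℝ) × (Fin np → ℝ))
              + t • ((s q, q) : (Fin nx → ℝ) × (Fin np → ℝ)) := by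
          rw [Prod.ext_iff]
          refine ⟨by rw [hζ_def]; rfl, ?_⟩
          show q = (1 - t) • q + t • q
          rw [← add_smul, show (1 - t) + t = 1 by ring, one_smul]
        have hconv := (hg_convex k).2 (mem_univ ((η, q) : (Fin nx → ℝ) × (Fin np → ℝ)))
          (mem_univ ((s q, q) : (Fin nx → ℝ) × (Fin np → ℝ)))
          (by linarith : (0:ℝ) ≤ 1 - t) ht0 (by ring : (1 - t) + t = 1)
        simp only [smul_eq_mul] at hconv
        have h1 : g k ζ q ≤ (1 - t) * g k η q + t * g k (s q) q := by
          rw [← hcmb] at hconv; simpa using hconv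
        have h2 : g k (s q) q ≤ -(ε/2) := (hδ₁U q (lt_of_lt_of_le hq hδa) k).le
        have h4 : (1 - t) * g k η q ≤ (1 - t) * ((c + 1) * M' * ‖p - q‖) :=
          mul_le_mul_of_nonneg_left (hgη k) (by linarith)
        have h5 : t * g k (s q) q ≤ t * (-(ε/2)) :=
          mul_le_mul_of_nonneg_left h2 ht0
        have h6 : t * (-(ε/2)) = -((c + 1) * M' * ‖p - q‖) := by
          rw [← htε]; ring
        nlinarith [mul_nonneg ht0 (mul_nonneg (mul_nonneg (by linarith : (0:ℝ) ≤ c + 1) hM'0)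
          (norm_nonneg (p - q)))]
      have hζΩ : ζ ∈ Ω q := by rw [hΩ]; exact ⟨hζeq, hgζ⟩
      have hζi : ζ i ≤ ξ i + L * ‖p - q‖ := by
        have h1 : ζ i = ξ i + (η i - ξ i) + t * ((s q) i - η i) := by
          rw [hζ_def]
          simp only [Pi.add_apply, Pi.smul_apply, smul_eq_mul]
          ring
        have h2 : |η i - ξ i| ≤ c * ‖p - q‖ := by
          have ha : |(η - ξ) i| ≤ ‖η - ξ‖ := by
            have := norm_le_pi_norm (η - ξ) i
            simpa using this
          have hb : ‖η - ξ‖ ≤ c * ‖p - q‖ := by rw [hηξ]; exact hc _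
          have : (η - ξ) i = η i - ξ i := rfl
          rw [this] at ha
          exact ha.trans hb
        have h3 : |(s q) i - η i| ≤ 2 * R + 2 * c := by
          have ha : |(s q) i| ≤ ‖s q‖ := by
            have := norm_le_pi_norm (s q) i; simpa using this
          have hb : |η i| ≤ ‖η‖ := by
            have := norm_le_pi_norm η i; simpa using this
          have habs : |(s q) i - η i| ≤ |(s q) i| + |η i| := abs_sub _ _
          nlinarith [hc0]
        have h4 : t * ((s q) i - η i) ≤ t * (2 * R + 2 * c) :=
          mul_le_mul_of_nonneg_left ((le_abs_self _).trans h3) ht0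
        have h5 : t * (2 * R + 2 * c) ≤ (2 * ((c + 1) * M') / ε) * (2 * R + 2 * c) * ‖p - q‖ := by
          have : t * (ε / 2) * (2 * R + 2 * c) = (c + 1) * M' * ‖p - q‖ * (2 * R + 2 * c) := by
            rw [htε]
          have hRc : 0 ≤ 2 * R + 2 * c := by linarith
          rw [div_mul_eq_mul_div, div_mul_eq_mul_div, le_div_iff₀ hε]
          nlinarith
        have h6 : η i - ξ i ≤ c * ‖p - q‖ := (le_abs_self _).trans h2
        rw [h1, hLval]
        nlinarith
      have hvq : v q ≤ ζ i := by
        rw [hv]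
        exact csInf_le (hbddB q) ⟨ζ, hζΩ, rfl⟩
      linarith
    have hlow : v q - L * ‖p - q‖ ≤ sInf ((fun ξ => ξ i) '' Ω p) := by
      apply le_csInf hΩpne
      rintro a ⟨ξ, hξ, rfl⟩
      have := main ξ hξ
      linarith
    rw [hv p] at *
    linarith
  intro p q hp hq
  have h1 := key p q hp hq
  have h2 := key q p hq hp
  rw [norm_sub_rev q p] at h2
  rw [abs_sub_le_iff]
  constructor <;> linarith
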